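/- Construction of the multiplicative formal distribution Lie algebra g_R: let (g, S) be a local lattice Lie algebra over a field F and q ∈ F nonzero. Model g[t,t⁻¹] as the space L of finitely supported families x = (x_m)_{m∈ℤ} with x_m ∈ g, define Σ : L → L by (Σx)_m := q^m·S(x_m), define the bilinear operation β on L by β(x,y)_p := ∑_{k∈ℤ} ∑_{m+n=p} q^{km}·⁅S^k x_m, y_n⁆ (all sums finite), and let M := span_F{Σ(x) − x : x ∈ L}. Then for all x, y, z ∈ L: (1) β(Σ(x) − x, y) = 0; (2) β(x, Σ(y) − y) ∈ M; (3) β(x,y) + β(y,x) ∈ M; (4) β(x, β(y,z)) − β(y, β(x,z)) = β(β(x,y), z). Consequently β descends to a well-defined Lie algebra bracket on the quotient L/M (the Lie algebra g_R = R[t,t⁻¹]/⟨μ_q S − 1⟩ associated to the corresponding multiplicative Lie conformal algebra, with bracket [a t^m, b t^n] = ∑_k q^{km} ⁅S^k a, b⁆ t^{m+n}). -/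

import Mathlib

/-- The map `Σ` on the model `L` of `g[t,t⁻¹]` (families `(x_m)_{m∈ℤ}`):
`(Σx)_m = q^m • S(x_m)`; it represents `μ_q S` where `μ_q(a tᵐ) = qᵐ a tᵐ`. -/
noncomputable def SigMap {F : Type*} [Field F] {g : Type*} [LieRing g] [LieAlgebra F g]
    (q : F) (S : g ≃ₗ[F] g) (x : ℤ → g) : ℤ → g :=
  fun m => q ^ m • S (x m)

/-- The bilinear operation `β` on the model of `g[t,t⁻¹]`:
`β(x,y)_p = ∑_{k∈ℤ} ∑_{m+n=p} q^{km} • ⁅Sᵏ x_m, y_n⁆`. -/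
noncomputable def betMap {F : Type*} [Field F] {g : Type*} [LieRing g] [LieAlgebra F g]
    (q : F) (S : g ≃ₗ[F] g) (x y : ℤ → g) : ℤ → g :=
  fun p => ∑ᶠ k : ℤ, ∑ᶠ m : ℤ, q ^ (k * m) • ⁅(S ^ k) (x m), y (p - m)⁆

open Function

namespace Stmt10Aux

variable {F : Type*} [Field F] {g : Type*} [LieRing g] [LieAlgebra F g]
variable (q : F) (S : g ≃ₗ[F] g)

lemma zpow_succ_apply (k : ℤ) (u : g) : (S ^ (k+1)) u = S ((S ^ k) u) := by
  have h : S ^ (k+1) = S * S ^ k := by group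
  rw [h]; exact rfl

lemma zpow_succ_apply' (k : ℤ) (u : g) : (S ^ (k+1)) u = (S ^ k) (S u) := by
  have h : S ^ (k+1) = S ^ k * S := by group
  rw [h]; exact rfl

lemma zpow_pred_apply (k : ℤ) (u : g) : (S ^ (k-1)) u = S.symm ((S ^ k) u) := by
  have h : S ^ (k-1) = S⁻¹ * S ^ k := by group
  rw [h]; exact rfl

lemma zpow_add_apply (j k : ℤ) (u : g) : (S ^ (j + k)) u = (S ^ j) ((S ^ k) u) := by
  have h : S ^ (j+k) = S ^ j * S ^ k := by group
  rw [h]; exact rfl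

lemma zpow_neg_cancel (k : ℤ) (u : g) : (S ^ (-k)) ((S ^ k) u) = u := by
  rw [← zpow_add_apply, neg_add_cancel]; simp

lemma symm_lie (hS : ∀ a b : g, S ⁅a, b⁆ = ⁅S a, S b⁆) (u v : g) :
    S.symm ⁅u, v⁆ = ⁅S.symm u, S.symm v⁆ := by
  apply S.injective
  rw [hS, S.apply_symm_apply, S.apply_symm_apply, S.apply_symm_apply]

lemma zpow_lie (hS : ∀ a b : g, S ⁅a, b⁆ = ⁅S a, S b⁆) (k : ℤ) (u v : g) :
    (S ^ k) ⁅u, v⁆ = ⁅(S ^ k) u, (S ^ k) v⁆ := by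
  induction k using Int.induction_on with
  | zero => simp
  | succ k ih => rw [zpow_succ_apply, ih, hS, ← zpow_succ_apply, ← zpow_succ_apply]
  | pred k ih =>
      have h : (-(k:ℤ) - 1) = (-(k:ℤ)) - 1 := by ring
      rw [h, zpow_pred_apply, ih, symm_lie S hS, ← zpow_pred_apply, ← zpow_pred_apply]

lemma support_inner (f u : ℤ → g) (p k : ℤ) :
    support (fun m => q ^ (k*m) • ⁅(S ^ k) (f m), u (p - m)⁆) ⊆ support f := by
  intro m hm
  rw [mem_support] at hm ⊢
  intro h; apply hm; rw [h]; simp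

lemma support_outer (hloc : ∀ a b : g, {n : ℤ | ⁅(S ^ n) a, b⁆ ≠ 0}.Finite)
    (f u : ℤ → g) (hf : (support f).Finite) (p : ℤ) :
    (support fun k : ℤ => ∑ᶠ m : ℤ, q ^ (k*m) • ⁅(S ^ k) (f m), u (p - m)⁆).Finite := by
  apply Set.Finite.subset (Set.Finite.biUnion hf fun m _ => hloc (f m) (u (p - m)))
  intro k hk
  rw [mem_support] at hk
  have hex : ∃ m, q ^ (k*m) • ⁅(S ^ k) (f m), u (p - m)⁆ ≠ 0 := by
    by_contra h
    push_neg at h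
    exact hk (finsum_eq_zero_of_forall_eq_zero h)
  obtain ⟨m, hm⟩ := hex
  have h1 : f m ≠ 0 := by intro h; apply hm; rw [h]; simp
  have h2 : ⁅(S ^ k) (f m), u (p - m)⁆ ≠ 0 := by intro h; apply hm; rw [h, smul_zero]
  exact Set.mem_biUnion h1 h2

lemma bet_support (f u : ℤ → g) (hf : (support f).Finite) (hu : (support u).Finite) :
    (support (betMap q S f u)).Finite := by
  apply Set.Finite.subset (Set.Finite.add hf hu)
  intro p hp
  rw [mem_support] at hp
  have hex : ∃ k : ℤ, ∑ᶠ m : ℤ, q ^ (k*m) • ⁅(S ^ k) (f m), u (p - m)⁆ ≠ 0 := by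
    by_contra h; push_neg at h; exact hp (finsum_eq_zero_of_forall_eq_zero h)
  obtain ⟨k, hk⟩ := hex
  have hex2 : ∃ m, q ^ (k*m) • ⁅(S ^ k) (f m), u (p - m)⁆ ≠ 0 := by
    by_contra h; push_neg at h; exact hk (finsum_eq_zero_of_forall_eq_zero h)
  obtain ⟨m, hm⟩ := hex2
  have h1 : f m ≠ 0 := by intro h; apply hm; rw [h]; simp
  have h2 : u (p - m) ≠ 0 := by intro h; apply hm; rw [h, lie_zero, smul_zero]
  have := Set.add_mem_add (show m ∈ support f from h1) (show p - m ∈ support u from h2)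
  simpa using this

lemma betL_zero (u : ℤ → g) : betMap q S 0 u = 0 := by
  funext p; simp [betMap]

lemma betR_zero (f : ℤ → g) : betMap q S f 0 = 0 := by
  funext p; simp [betMap]

lemma betL_add (hloc : ∀ a b : g, {n : ℤ | ⁅(S ^ n) a, b⁆ ≠ 0}.Finite)
    (f f' u : ℤ → g) (hf : (support f).Finite) (hf' : (support f').Finite) :
    betMap q S (f + f') u = betMap q S f u + betMap q S f' u := by
  funext p
  simp only [betMap, Pi.add_apply]
  calc
    ∑ᶠ k : ℤ, ∑ᶠ m : ℤ, q ^ (k*m) • ⁅(S ^ k) ((f + f') m), u (p - m)⁆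
        = ∑ᶠ k : ℤ, ((∑ᶠ m : ℤ, q ^ (k*m) • ⁅(S ^ k) (f m), u (p - m)⁆)
            + ∑ᶠ m : ℤ, q ^ (k*m) • ⁅(S ^ k) (f' m), u (p - m)⁆) := by
      refine finsum_congr fun k => ?_
      rw [← finsum_add_distrib (hf.subset (support_inner q S f u p k))
        (hf'.subset (support_inner q S f' u p k))]
      refine finsum_congr fun m => ?_
      simp only [Pi.add_apply, map_add, add_lie, smul_add]
    _ = _ := finsum_add_distrib (support_outer q S hloc f u hf p)
        (support_outer q S hloc f' u hf' p)

lemma betR_add (hloc : ∀ a b : g, {n : ℤ | ⁅(S ^ n) a, b⁆ ≠ 0}.Finite)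
    (f u u' : ℤ → g) (hf : (support f).Finite) :
    betMap q S f (u + u') = betMap q S f u + betMap q S f u' := by
  funext p
  simp only [betMap, Pi.add_apply]
  calc
    ∑ᶠ k : ℤ, ∑ᶠ m : ℤ, q ^ (k*m) • ⁅(S ^ k) (f m), (u + u') (p - m)⁆
        = ∑ᶠ k : ℤ, ((∑ᶠ m : ℤ, q ^ (k*m) • ⁅(S ^ k) (f m), u (p - m)⁆)
            + ∑ᶠ m : ℤ, q ^ (k*m) • ⁅(S ^ k) (f m), u' (p - m)⁆) := by
      refine finsum_congr fun k => ?_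
      rw [← finsum_add_distrib (hf.subset (support_inner q S f u p k))
        (hf.subset (support_inner q S f u' p k))]
      refine finsum_congr fun m => ?_
      simp only [Pi.add_apply, lie_add, smul_add]
    _ = _ := finsum_add_distrib (support_outer q S hloc f u hf p)
        (support_outer q S hloc f u' hf p)

noncomputable def ccfun (a b : g) (m : ℤ) : g := ∑ᶠ k : ℤ, q ^ (k*m) • ⁅(S ^ k) a, b⁆

lemma bet_single (m n : ℤ) (a b : g) :
    betMap q S ⇑(Finsupp.single m a) ⇑(Finsupp.single n b)
      = ⇑(Finsupp.single (m+n) (ccfun q S a b m)) := by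
  funext p
  simp only [betMap]
  have hinner : ∀ k : ℤ,
      (∑ᶠ m' : ℤ, q ^ (k*m') • ⁅(S ^ k) ((Finsupp.single m a) m'), (Finsupp.single n b) (p - m')⁆)
      = q ^ (k*m) • ⁅(S ^ k) a, (Finsupp.single n b) (p - m)⁆ := by
    intro k
    rw [finsum_eq_single _ m ?_, Finsupp.single_eq_same]
    intro m' hm'
    rw [Finsupp.single_eq_of_ne' (Ne.symm hm')]
    simp
  rw [finsum_congr hinner]
  by_cases hp : p = m + n
  · subst hp
    rw [show m + n - m = n by ring, Finsupp.single_eq_same, Finsupp.single_eq_same]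
    rfl
  · have h1 : p - m ≠ n := fun h => hp (by omega)
    have h2 : (m + n : ℤ) ≠ p := fun h => hp h.symm
    rw [Finsupp.single_eq_of_ne' h2]
    rw [finsum_congr (fun k => by rw [Finsupp.single_eq_of_ne' (Ne.symm h1), lie_zero, smul_zero]),
      finsum_zero]
lemma part1 (hq : q ≠ 0) (hloc : ∀ a b : g, {n : ℤ | ⁅(S ^ n) a, b⁆ ≠ 0}.Finite)
    (x : ℤ →₀ g) (y : ℤ → g) :
    betMap q S (SigMap q S ⇑x - ⇑x) y = 0 := by
  funext p
  have hterm : ∀ k m : ℤ,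
      q ^ (k*m) • ⁅(S ^ k) ((SigMap q S ⇑x - ⇑x) m), y (p - m)⁆
        = q ^ ((k+1)*m) • ⁅(S ^ (k+1)) (x m), y (p - m)⁆
          - q ^ (k*m) • ⁅(S ^ k) (x m), y (p - m)⁆ := by
    intro k m
    have h1 : (SigMap q S ⇑x - ⇑x) m = q ^ m • S (x m) - x m := rfl
    rw [h1, map_sub, map_smul, sub_lie, smul_lie, smul_sub, smul_smul, ← zpow_add₀ hq,
      show k*m + m = (k+1)*m by ring, ← zpow_succ_apply']
  have hsub1 : ∀ k : ℤ, (support fun m => q ^ (k*m) • ⁅(S ^ k) (x m), y (p - m)⁆).Finite :=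
    fun k => x.finite_support.subset (support_inner q S ⇑x y p k)
  set H : ℤ → g := fun k => ∑ᶠ m : ℤ, q ^ (k*m) • ⁅(S ^ k) (x m), y (p - m)⁆ with hH
  have hHfin : (support H).Finite := support_outer q S hloc ⇑x y x.finite_support p
  have hstep : ∀ k : ℤ,
      (∑ᶠ m : ℤ, q ^ (k*m) • ⁅(S ^ k) ((SigMap q S ⇑x - ⇑x) m), y (p - m)⁆)
        = H (k+1) - H k := by
    intro k
    rw [finsum_congr (fun m => hterm k m), finsum_sub_distrib (hsub1 (k+1)) (hsub1 k)]
  have hfin2 : (support fun k : ℤ => H (k+1)).Finite := by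
    have hsub : (support fun k : ℤ => H (k+1)) ⊆ (fun k : ℤ => k + 1) ⁻¹' (support H) :=
      fun k hk => hk
    exact Set.Finite.subset (Set.Finite.preimage ((add_left_injective (1:ℤ)).injOn) hHfin) hsub
  show (∑ᶠ k : ℤ, ∑ᶠ m : ℤ, q ^ (k*m) • ⁅(S ^ k) ((SigMap q S ⇑x - ⇑x) m), y (p - m)⁆) = 0
  rw [finsum_congr hstep, finsum_sub_distrib hfin2 hHfin]
  have hre : (∑ᶠ k : ℤ, H (k+1)) = ∑ᶠ k : ℤ, H k := finsum_comp_equiv (Equiv.addRight (1:ℤ))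
  rw [hre, sub_self]
lemma part2_eq (hq : q ≠ 0) (hS : ∀ a b : g, S ⁅a, b⁆ = ⁅S a, S b⁆)
    (hloc : ∀ a b : g, {n : ℤ | ⁅(S ^ n) a, b⁆ ≠ 0}.Finite)
    (x : ℤ →₀ g) (u : ℤ → g) :
    betMap q S ⇑x (SigMap q S u - u)
      = SigMap q S (betMap q S ⇑x u) - betMap q S ⇑x u := by
  funext p
  set h : ℤ → ℤ → g := fun k m => q ^ (k*m) • ⁅(S ^ k) (x m), u (p - m)⁆ with hh
  have hterm : ∀ k m : ℤ,
      q ^ (k*m) • ⁅(S ^ k) (x m), (SigMap q S u - u) (p - m)⁆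
        = q ^ p • S (h (k-1) m) - h k m := by
    intro k m
    have h1 : (SigMap q S u - u) (p - m) = q ^ (p-m) • S (u (p - m)) - u (p - m) := rfl
    rw [h1, lie_sub, lie_smul, smul_sub]
    congr 1
    have h2 : S (h (k-1) m) = q ^ ((k-1)*m) • ⁅(S ^ k) (x m), S (u (p - m))⁆ := by
      show S (q ^ ((k-1)*m) • ⁅(S ^ (k-1)) (x m), u (p-m)⁆) = _
      rw [map_smul, hS]
      congr 2
      rw [← zpow_succ_apply, sub_add_cancel]
    rw [h2, smul_smul, smul_smul, ← zpow_add₀ hq, ← zpow_add₀ hq,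
      show k*m + (p - m) = p + (k-1)*m by ring]
  have hsub1 : ∀ k : ℤ, (support (h k)).Finite :=
    fun k => x.finite_support.subset (support_inner q S ⇑x u p k)
  have hsubS : ∀ k : ℤ, (support fun m => S (h k m)).Finite := by
    intro k
    apply (hsub1 k).subset
    intro m hm
    rw [mem_support] at hm ⊢
    intro h0; apply hm; rw [h0, map_zero]
  have hsubS2 : ∀ k : ℤ, (support fun m => q ^ p • S (h (k-1) m)).Finite := by
    intro k
    apply (hsubS (k-1)).subset
    intro m hm
    rw [mem_support] at hm ⊢
    intro h0; apply hm; rw [h0, smul_zero]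
  set H : ℤ → g := fun k => ∑ᶠ m : ℤ, h k m with hH
  have hHfin : (support H).Finite := support_outer q S hloc ⇑x u x.finite_support p
  have hstep : ∀ k : ℤ,
      (∑ᶠ m : ℤ, q ^ (k*m) • ⁅(S ^ k) (x m), (SigMap q S u - u) (p - m)⁆)
        = q ^ p • S (H (k-1)) - H k := by
    intro k
    rw [finsum_congr (hterm k), finsum_sub_distrib (hsubS2 k) (hsub1 k)]
    congr 1
    rw [← smul_finsum' (q ^ p) (hsubS (k-1))]
    congr 1
    exact (S.toAddEquiv.map_finsum (h (k-1))).symm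
  have hfin2 : (support fun k : ℤ => q ^ p • S (H (k-1))).Finite := by
    have hsub : (support fun k : ℤ => q ^ p • S (H (k-1)))
        ⊆ (fun k : ℤ => k - 1) ⁻¹' (support H) := by
      intro k hk
      rw [mem_support] at hk
      show k - 1 ∈ support H
      rw [mem_support]
      intro h0; apply hk; rw [h0, map_zero, smul_zero]
    exact Set.Finite.subset
      (Set.Finite.preimage ((Equiv.subRight (1:ℤ)).injective.injOn) hHfin) hsub
  have hSH : (support fun k : ℤ => S (H k)).Finite := by
    apply hHfin.subset
    intro k hk
    rw [mem_support] at hk ⊢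
    intro h0; apply hk; rw [h0, map_zero]
  show (∑ᶠ k : ℤ, ∑ᶠ m : ℤ, q ^ (k*m) • ⁅(S ^ k) (x m), (SigMap q S u - u) (p - m)⁆)
      = q ^ p • S (∑ᶠ k : ℤ, ∑ᶠ m : ℤ, q ^ (k*m) • ⁅(S ^ k) (x m), u (p - m)⁆)
        - ∑ᶠ k : ℤ, ∑ᶠ m : ℤ, q ^ (k*m) • ⁅(S ^ k) (x m), u (p - m)⁆
  rw [finsum_congr hstep, finsum_sub_distrib hfin2 hHfin]
  congr 1
  calc ∑ᶠ k : ℤ, q ^ p • S (H (k-1))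
      = ∑ᶠ k : ℤ, q ^ p • S (H k) :=
        finsum_comp_equiv (Equiv.subRight (1:ℤ)) (f := fun k => q ^ p • S (H k))
    _ = q ^ p • ∑ᶠ k : ℤ, S (H k) := (smul_finsum' _ hSH).symm
    _ = q ^ p • S (∑ᶠ k : ℤ, H k) := congrArg (q ^ p • ·) (S.toAddEquiv.map_finsum H).symm
lemma sig_single (s : ℤ) (v : g) :
    SigMap q S ⇑(Finsupp.single s v) = ⇑(Finsupp.single s (q ^ s • S v)) := by
  funext p
  by_cases hp : p = s
  · subst hp
    show q ^ p • S ((Finsupp.single p v) p) = _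
    rw [Finsupp.single_eq_same, Finsupp.single_eq_same]
  · have h2 : s ≠ p := fun h => hp h.symm
    show q ^ p • S ((Finsupp.single s v) p) = (Finsupp.single s (q ^ s • S v)) p
    rw [Finsupp.single_eq_of_ne' h2, Finsupp.single_eq_of_ne' h2, map_zero, smul_zero]

lemma gen_mem (M : Submodule F (ℤ → g))
    (hM : M = Submodule.span F {h : ℤ → g | ∃ x : ℤ →₀ g, h = SigMap q S ⇑x - ⇑x})
    (x : ℤ →₀ g) : SigMap q S ⇑x - ⇑x ∈ M := by
  rw [hM]
  exact Submodule.subset_span ⟨x, rfl⟩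

lemma single_mem (hq : q ≠ 0) (M : Submodule F (ℤ → g))
    (hM : M = Submodule.span F {h : ℤ → g | ∃ x : ℤ →₀ g, h = SigMap q S ⇑x - ⇑x})
    (s : ℤ) (u : g) (k : ℤ) :
    ⇑(Finsupp.single s (q ^ (k*s) • (S ^ k) u)) - ⇑(Finsupp.single s u) ∈ M := by
  induction k using Int.induction_on with
  | zero => simp
  | succ k ih =>
      set v : g := q ^ ((k:ℤ)*s) • (S ^ (k:ℤ)) u with hv
      have hval : q ^ (((k:ℤ)+1)*s) • (S ^ ((k:ℤ)+1)) u = q ^ s • S v := by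
        rw [hv, map_smul, smul_smul, ← zpow_add₀ hq, ← zpow_succ_apply,
          show s + (k:ℤ)*s = ((k:ℤ)+1)*s by ring]
      have h1 : (⇑(Finsupp.single s (q ^ (((k:ℤ)+1)*s) • (S ^ ((k:ℤ)+1)) u)) : ℤ → g)
            - ⇑(Finsupp.single s u)
          = (SigMap q S ⇑(Finsupp.single s v) - ⇑(Finsupp.single s v))
            + (⇑(Finsupp.single s v) - ⇑(Finsupp.single s u)) := by
        rw [hval, sig_single, sub_add_sub_cancel]
      rw [h1]
      exact M.add_mem (gen_mem q S M hM (Finsupp.single s v)) ih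
  | pred k ih =>
      set v : g := q ^ ((-(k:ℤ)-1)*s) • (S ^ (-(k:ℤ)-1)) u with hv
      have hval : q ^ ((-(k:ℤ))*s) • (S ^ (-(k:ℤ))) u = q ^ s • S v := by
        rw [hv, map_smul, smul_smul, ← zpow_add₀ hq,
          show S ((S ^ (-(k:ℤ)-1)) u) = (S ^ (-(k:ℤ))) u by
            rw [← zpow_succ_apply]; norm_num,
          show s + (-(k:ℤ)-1)*s = (-(k:ℤ))*s by ring]
      have h1 : (⇑(Finsupp.single s (q ^ ((-(k:ℤ)-1)*s) • (S ^ (-(k:ℤ)-1)) u)) : ℤ → g)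
            - ⇑(Finsupp.single s u)
          = (⇑(Finsupp.single s (q ^ ((-(k:ℤ))*s) • (S ^ (-(k:ℤ))) u)) - ⇑(Finsupp.single s u))
            - (SigMap q S ⇑(Finsupp.single s v) - ⇑(Finsupp.single s v)) := by
        rw [sig_single, ← hval, hv]
        abel
      rw [h1]
      exact M.sub_mem ih (gen_mem q S M hM (Finsupp.single s v))
lemma zpow_cancel' (k : ℤ) (u : g) : (S ^ k) ((S ^ (-k)) u) = u := by
  have := zpow_neg_cancel S (-k) u
  simpa using this

lemma part3_single (hq : q ≠ 0) (hS : ∀ a b : g, S ⁅a, b⁆ = ⁅S a, S b⁆)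
    (hloc : ∀ a b : g, {n : ℤ | ⁅(S ^ n) a, b⁆ ≠ 0}.Finite)
    (M : Submodule F (ℤ → g))
    (hM : M = Submodule.span F {h : ℤ → g | ∃ x : ℤ →₀ g, h = SigMap q S ⇑x - ⇑x})
    (m n : ℤ) (a b : g) :
    (⇑(Finsupp.single (m+n) (ccfun q S a b m)) : ℤ → g)
      + ⇑(Finsupp.single (n+m) (ccfun q S b a n)) ∈ M := by
  rw [show n + m = m + n by ring, ← Finsupp.coe_add, ← Finsupp.single_add]
  set T : Finset ℤ := (hloc a b).toFinset with hT
  have h1 : ccfun q S a b m = ∑ k ∈ T, q ^ (k*m) • ⁅(S ^ k) a, b⁆ := by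
    apply finsum_eq_finset_sum_of_support_subset
    rw [hT, Set.Finite.coe_toFinset]
    intro k hk
    rw [mem_support] at hk
    show ⁅(S ^ k) a, b⁆ ≠ 0
    intro h0; apply hk; rw [h0, smul_zero]
  have h2 : ccfun q S b a n = ∑ k ∈ T, -(q ^ (-(k*n)) • (S ^ (-k:ℤ)) ⁅(S ^ k) a, b⁆) := by
    have e1 : ccfun q S b a n = ∑ᶠ k : ℤ, q ^ ((-k)*n) • ⁅(S ^ (-k:ℤ)) b, a⁆ :=
      (finsum_comp_equiv (Equiv.neg ℤ) (f := fun k => q ^ (k*n) • ⁅(S ^ k) b, a⁆)).symm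
    rw [e1]
    have e2 : ∀ k : ℤ, q ^ ((-k)*n) • ⁅(S ^ (-k:ℤ)) b, a⁆
        = -(q ^ (-(k*n)) • (S ^ (-k:ℤ)) ⁅(S ^ k) a, b⁆) := by
      intro k
      have hx : (S ^ (-k : ℤ)) ⁅(S ^ k) a, b⁆ = ⁅a, (S ^ (-k:ℤ)) b⁆ := by
        rw [zpow_lie S hS, zpow_neg_cancel]
      have : -(q ^ (-(k*n)) • (S ^ (-k:ℤ)) ⁅(S ^ k) a, b⁆)
          = q ^ ((-k)*n) • ⁅(S ^ (-k:ℤ)) b, a⁆ := by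
        rw [hx, ← smul_neg, lie_skew, show -(k*n) = (-k)*n by ring]
      exact this.symm
    rw [finsum_congr e2]
    apply finsum_eq_finset_sum_of_support_subset
    rw [hT, Set.Finite.coe_toFinset]
    intro k hk
    rw [mem_support] at hk
    show ⁅(S ^ k) a, b⁆ ≠ 0
    intro h0; apply hk; rw [h0, map_zero, smul_zero, neg_zero]
  rw [h1, h2, ← Finset.sum_add_distrib]
  have hsum : (Finsupp.single (m+n) (∑ k ∈ T, (q ^ (k*m) • ⁅(S ^ k) a, b⁆
        + -(q ^ (-(k*n)) • (S ^ (-k:ℤ)) ⁅(S ^ k) a, b⁆))) : ℤ →₀ g)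
      = ∑ k ∈ T, Finsupp.single (m+n) (q ^ (k*m) • ⁅(S ^ k) a, b⁆
        + -(q ^ (-(k*n)) • (S ^ (-k:ℤ)) ⁅(S ^ k) a, b⁆)) :=
    map_sum (Finsupp.singleAddHom (m+n)) _ T
  rw [hsum, Finsupp.coe_finset_sum]
  apply Submodule.sum_mem
  intro k _
  have hAB : (Finsupp.single (m+n) (q ^ (k*m) • ⁅(S ^ k) a, b⁆
        + -(q ^ (-(k*n)) • (S ^ (-k:ℤ)) ⁅(S ^ k) a, b⁆)) : ℤ →₀ g)
      = Finsupp.single (m+n) (q ^ (k*m) • ⁅(S ^ k) a, b⁆)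
        - Finsupp.single (m+n) (q ^ (-(k*n)) • (S ^ (-k:ℤ)) ⁅(S ^ k) a, b⁆) := by
    rw [← sub_eq_add_neg]
    exact map_sub (Finsupp.singleAddHom (m+n)) _ _
  have hu : q ^ (k*(m+n)) • (S ^ k) (q ^ (-(k*n)) • (S ^ (-k:ℤ)) ⁅(S ^ k) a, b⁆)
      = q ^ (k*m) • ⁅(S ^ k) a, b⁆ := by
    rw [map_smul, smul_smul, ← zpow_add₀ hq, zpow_cancel',
      show k*(m+n) + -(k*n) = k*m by ring]
  show (⇑(Finsupp.single (m+n) (q ^ (k*m) • ⁅(S ^ k) a, b⁆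
        + -(q ^ (-(k*n)) • (S ^ (-k:ℤ)) ⁅(S ^ k) a, b⁆))) : ℤ → g) ∈ M
  rw [hAB, Finsupp.coe_sub, ← hu]
  exact single_mem q S hq M hM (m+n) _ k
lemma part3_left (hq : q ≠ 0) (hS : ∀ a b : g, S ⁅a, b⁆ = ⁅S a, S b⁆)
    (hloc : ∀ a b : g, {n : ℤ | ⁅(S ^ n) a, b⁆ ≠ 0}.Finite)
    (M : Submodule F (ℤ → g))
    (hM : M = Submodule.span F {h : ℤ → g | ∃ x : ℤ →₀ g, h = SigMap q S ⇑x - ⇑x})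
    (m : ℤ) (a : g) (y : ℤ →₀ g) :
    betMap q S ⇑(Finsupp.single m a) ⇑y + betMap q S ⇑y ⇑(Finsupp.single m a) ∈ M := by
  induction y using Finsupp.induction with
  | zero =>
      rw [Finsupp.coe_zero, betR_zero, betL_zero]
      simpa using M.zero_mem
  | single_add n b f hnf hb0 ih =>
      rw [Finsupp.coe_add, betR_add q S hloc _ _ _ (Finsupp.single m a).finite_support,
        betL_add q S hloc _ _ _ (Finsupp.single n b).finite_support f.finite_support,
        add_add_add_comm]
      refine M.add_mem ?_ ih
      rw [bet_single, bet_single]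
      exact part3_single q S hq hS hloc M hM m n a b

lemma part3 (hq : q ≠ 0) (hS : ∀ a b : g, S ⁅a, b⁆ = ⁅S a, S b⁆)
    (hloc : ∀ a b : g, {n : ℤ | ⁅(S ^ n) a, b⁆ ≠ 0}.Finite)
    (M : Submodule F (ℤ → g))
    (hM : M = Submodule.span F {h : ℤ → g | ∃ x : ℤ →₀ g, h = SigMap q S ⇑x - ⇑x})
    (x y : ℤ →₀ g) :
    betMap q S ⇑x ⇑y + betMap q S ⇑y ⇑x ∈ M := by
  induction x using Finsupp.induction generalizing y with
  | zero =>
      rw [Finsupp.coe_zero, betL_zero, betR_zero]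
      simpa using M.zero_mem
  | single_add m a f hmf ha0 ih =>
      rw [Finsupp.coe_add, betL_add q S hloc _ _ _ (Finsupp.single m a).finite_support
        f.finite_support, betR_add q S hloc _ _ _ y.finite_support, add_add_add_comm]
      exact M.add_mem (part3_left q S hq hS hloc M hM m a y) (ih y)
lemma lie_sum_right {ι : Type*} (x : g) (s : Finset ι) (f : ι → g) :
    ⁅x, ∑ i ∈ s, f i⁆ = ∑ i ∈ s, ⁅x, f i⁆ :=
  map_sum (AddMonoidHom.mk' (fun y => ⁅x, y⁆) (fun u v => lie_add x u v)) f s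

lemma sum_lie_left {ι : Type*} (x : g) (s : Finset ι) (f : ι → g) :
    ⁅∑ i ∈ s, f i, x⁆ = ∑ i ∈ s, ⁅f i, x⁆ :=
  map_sum (AddMonoidHom.mk' (fun y => ⁅y, x⁆) (fun u v => add_lie u v x)) f s

lemma cc_jacobi (hq : q ≠ 0) (hS : ∀ a b : g, S ⁅a, b⁆ = ⁅S a, S b⁆)
    (hloc : ∀ a b : g, {n : ℤ | ⁅(S ^ n) a, b⁆ ≠ 0}.Finite)
    (m n : ℤ) (a b c : g) :
    ccfun q S a (ccfun q S b c n) m - ccfun q S b (ccfun q S a c m) n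
      = ccfun q S (ccfun q S a b m) c (m+n) := by
  classical
  have hsc : ∀ (e1 e2 : ℤ) (X : g), q ^ e1 • q ^ e2 • X = q ^ (e1 + e2) • X := by
    intro e1 e2 X
    rw [smul_smul, ← zpow_add₀ hq]
  set Kbc : Finset ℤ := (hloc b c).toFinset with hKbc
  set Kac : Finset ℤ := (hloc a c).toFinset with hKac
  set Kab : Finset ℤ := (hloc a b).toFinset with hKab
  set A1 : Finset ℤ := Kbc.biUnion (fun l => (hloc a ⁅(S ^ l) b, c⁆).toFinset) with hA1
  set A2 : Finset ℤ := Kac.biUnion (fun k => (hloc b ⁅(S ^ k) a, c⁆).toFinset) with hA2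
  set V : Finset ℤ := Kab.biUnion (fun d => (hloc ⁅(S ^ d) a, b⁆ c).toFinset) with hV
  set W : Finset ℤ := V.biUnion (fun k => Kab.image (fun d => d + k)) with hW
  set Q : Finset ℤ := ((((A1 ∪ A2) ∪ Kbc) ∪ Kac) ∪ V) ∪ W with hQ
  have hA1Q : A1 ⊆ Q := by intro k hk; simp [hQ, hk]
  have hA2Q : A2 ⊆ Q := by intro k hk; simp [hQ, hk]
  have hKbcQ : Kbc ⊆ Q := by intro k hk; simp [hQ, hk]
  have hKacQ : Kac ⊆ Q := by intro k hk; simp [hQ, hk]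
  have hVQ : V ⊆ Q := by intro k hk; simp [hQ, hk]
  have hWQ : W ⊆ Q := by intro k hk; simp [hQ, hk]
  -- vanishing lemmas
  have hT1v : ∀ k l : ℤ, k ∉ A1 → q ^ (k*m + l*n) • ⁅(S ^ k) a, ⁅(S ^ l) b, c⁆⁆ = 0 := by
    intro k l hk
    by_contra h0
    have hc : ⁅(S ^ l) b, c⁆ ≠ 0 := by intro h; apply h0; rw [h, lie_zero, smul_zero]
    have hbr : ⁅(S ^ k) a, ⁅(S ^ l) b, c⁆⁆ ≠ 0 := by intro h; apply h0; rw [h, smul_zero]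
    exact hk (Finset.mem_biUnion.mpr
      ⟨l, (hloc b c).mem_toFinset.mpr hc, (hloc a _).mem_toFinset.mpr hbr⟩)
  have hT2v : ∀ k l : ℤ, l ∉ A2 → q ^ (k*m + l*n) • ⁅(S ^ l) b, ⁅(S ^ k) a, c⁆⁆ = 0 := by
    intro k l hl
    by_contra h0
    have hc : ⁅(S ^ k) a, c⁆ ≠ 0 := by intro h; apply h0; rw [h, lie_zero, smul_zero]
    have hbr : ⁅(S ^ l) b, ⁅(S ^ k) a, c⁆⁆ ≠ 0 := by intro h; apply h0; rw [h, smul_zero]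
    exact hl (Finset.mem_biUnion.mpr
      ⟨k, (hloc a c).mem_toFinset.mpr hc, (hloc b _).mem_toFinset.mpr hbr⟩)
  have hsplit2 : ∀ j k : ℤ, ⁅(S ^ j) a, (S ^ k) b⁆ = (S ^ k) ⁅(S ^ (j-k)) a, b⁆ := by
    intro j k
    rw [zpow_lie S hS, ← zpow_add_apply, show k + (j-k) = j by ring]
  have hGv : ∀ j k : ℤ, (j ∉ W ∨ k ∉ V) →
      q ^ (j*m + k*n) • ⁅⁅(S ^ j) a, (S ^ k) b⁆, c⁆ = 0 := by
    intro j k hjk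
    by_contra h0
    have hab : ⁅(S ^ (j-k)) a, b⁆ ≠ 0 := by
      intro h; apply h0; rw [hsplit2, h, map_zero, zero_lie, smul_zero]
    have hbr : ⁅(S ^ k) ⁅(S ^ (j-k)) a, b⁆, c⁆ ≠ 0 := by
      intro h; apply h0; rw [hsplit2, h, smul_zero]
    have hkV : k ∈ V :=
      Finset.mem_biUnion.mpr ⟨j-k, (hloc a b).mem_toFinset.mpr hab,
        (hloc _ c).mem_toFinset.mpr hbr⟩
    have hjW : j ∈ W :=
      Finset.mem_biUnion.mpr ⟨k, hkV,
        Finset.mem_image.mpr ⟨j-k, (hloc a b).mem_toFinset.mpr hab, by ring⟩⟩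
    rcases hjk with h | h
    · exact h hjW
    · exact h hkV
  -- LHS1
  have hbcQ : ccfun q S b c n = ∑ l ∈ Q, q ^ (l*n) • ⁅(S ^ l) b, c⁆ := by
    apply finsum_eq_finset_sum_of_support_subset
    intro l hl
    rw [mem_support] at hl
    have : ⁅(S ^ l) b, c⁆ ≠ 0 := by intro h; apply hl; rw [h, smul_zero]
    exact hKbcQ ((hloc b c).mem_toFinset.mpr this)
  have hLHS1 : ccfun q S a (ccfun q S b c n) m
      = ∑ k ∈ Q, ∑ l ∈ Q, q ^ (k*m + l*n) • ⁅(S ^ k) a, ⁅(S ^ l) b, c⁆⁆ := by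
    have hinner : ∀ k : ℤ, q ^ (k*m) • ⁅(S ^ k) a, ccfun q S b c n⁆
        = ∑ l ∈ Q, q ^ (k*m + l*n) • ⁅(S ^ k) a, ⁅(S ^ l) b, c⁆⁆ := by
      intro k
      rw [hbcQ, lie_sum_right, Finset.smul_sum]
      refine Finset.sum_congr rfl fun l _ => ?_
      rw [lie_smul, hsc]
    rw [show ccfun q S a (ccfun q S b c n) m
        = ∑ᶠ k : ℤ, q ^ (k*m) • ⁅(S ^ k) a, ccfun q S b c n⁆ from rfl,
      finsum_congr hinner]
    apply finsum_eq_finset_sum_of_support_subset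
    intro k hk
    rw [mem_support] at hk
    obtain ⟨l, _, hl⟩ := Finset.exists_ne_zero_of_sum_ne_zero hk
    have : k ∈ A1 := by
      by_contra hkA
      exact hl (hT1v k l hkA)
    exact hA1Q this
  -- LHS2
  have hacQ : ccfun q S a c m = ∑ k ∈ Q, q ^ (k*m) • ⁅(S ^ k) a, c⁆ := by
    apply finsum_eq_finset_sum_of_support_subset
    intro k hk
    rw [mem_support] at hk
    have : ⁅(S ^ k) a, c⁆ ≠ 0 := by intro h; apply hk; rw [h, smul_zero]
    exact hKacQ ((hloc a c).mem_toFinset.mpr this)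
  have hLHS2 : ccfun q S b (ccfun q S a c m) n
      = ∑ l ∈ Q, ∑ k ∈ Q, q ^ (k*m + l*n) • ⁅(S ^ l) b, ⁅(S ^ k) a, c⁆⁆ := by
    have hinner : ∀ l : ℤ, q ^ (l*n) • ⁅(S ^ l) b, ccfun q S a c m⁆
        = ∑ k ∈ Q, q ^ (k*m + l*n) • ⁅(S ^ l) b, ⁅(S ^ k) a, c⁆⁆ := by
      intro l
      rw [hacQ, lie_sum_right, Finset.smul_sum]
      refine Finset.sum_congr rfl fun k _ => ?_
      rw [lie_smul, hsc, show l*n + k*m = k*m + l*n by ring]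
    rw [show ccfun q S b (ccfun q S a c m) n
        = ∑ᶠ l : ℤ, q ^ (l*n) • ⁅(S ^ l) b, ccfun q S a c m⁆ from rfl,
      finsum_congr hinner]
    apply finsum_eq_finset_sum_of_support_subset
    intro l hl
    rw [mem_support] at hl
    obtain ⟨k, _, hk⟩ := Finset.exists_ne_zero_of_sum_ne_zero hl
    have : l ∈ A2 := by
      by_contra hlA
      exact hk (hT2v k l hlA)
    exact hA2Q this
  -- RHS
  have habK : ccfun q S a b m = ∑ j ∈ Kab, q ^ (j*m) • ⁅(S ^ j) a, b⁆ := by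
    apply finsum_eq_finset_sum_of_support_subset
    intro j hj
    rw [mem_support] at hj
    have : ⁅(S ^ j) a, b⁆ ≠ 0 := by intro h; apply hj; rw [h, smul_zero]
    exact (hloc a b).mem_toFinset.mpr this
  have hRHS : ccfun q S (ccfun q S a b m) c (m+n)
      = ∑ k ∈ Q, ∑ j ∈ Q, q ^ (j*m + k*n) • ⁅⁅(S ^ j) a, (S ^ k) b⁆, c⁆ := by
    have hinner : ∀ k : ℤ, q ^ (k*(m+n)) • ⁅(S ^ k) (ccfun q S a b m), c⁆
        = ∑ j ∈ Q, q ^ (j*m + k*n) • ⁅⁅(S ^ j) a, (S ^ k) b⁆, c⁆ := by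
      intro k
      have step1 : q ^ (k*(m+n)) • ⁅(S ^ k) (ccfun q S a b m), c⁆
          = ∑ j ∈ Kab, q ^ (k*(m+n) + j*m) • ⁅⁅(S ^ (k+j)) a, (S ^ k) b⁆, c⁆ := by
        rw [habK, map_sum, sum_lie_left, Finset.smul_sum]
        refine Finset.sum_congr rfl fun j _ => ?_
        rw [map_smul, zpow_lie S hS, smul_lie, hsc, ← zpow_add_apply]
      rw [step1]
      have step2 : ∑ j ∈ Kab, q ^ (k*(m+n) + j*m) • ⁅⁅(S ^ (k+j)) a, (S ^ k) b⁆, c⁆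
          = ∑ᶠ j : ℤ, q ^ (k*(m+n) + j*m) • ⁅⁅(S ^ (k+j)) a, (S ^ k) b⁆, c⁆ := by
        symm
        apply finsum_eq_finset_sum_of_support_subset
        intro j hj
        rw [mem_support] at hj
        have : ⁅(S ^ j) a, b⁆ ≠ 0 := by
          intro h
          apply hj
          have : ⁅(S ^ (k+j)) a, (S ^ k) b⁆ = (S ^ k) ⁅(S ^ j) a, b⁆ := by
            rw [zpow_lie S hS, ← zpow_add_apply]
          rw [this, h, map_zero, zero_lie, smul_zero]
        exact (hloc a b).mem_toFinset.mpr this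
      rw [step2]
      have step3 : (∑ᶠ j : ℤ, q ^ (k*(m+n) + j*m) • ⁅⁅(S ^ (k+j)) a, (S ^ k) b⁆, c⁆)
          = ∑ᶠ j : ℤ, q ^ (j*m + k*n) • ⁅⁅(S ^ j) a, (S ^ k) b⁆, c⁆ := by
        rw [finsum_congr (fun j => show q ^ (k*(m+n) + j*m) • ⁅⁅(S ^ (k+j)) a, (S ^ k) b⁆, c⁆
          = q ^ ((k+j)*m + k*n) • ⁅⁅(S ^ (k+j)) a, (S ^ k) b⁆, c⁆ by
            rw [show k*(m+n) + j*m = (k+j)*m + k*n by ring])]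
        exact finsum_comp_equiv (Equiv.addLeft k)
          (f := fun j => q ^ (j*m + k*n) • ⁅⁅(S ^ j) a, (S ^ k) b⁆, c⁆)
      rw [step3]
      apply finsum_eq_finset_sum_of_support_subset
      intro j hj
      rw [mem_support] at hj
      have : j ∈ W := by
        by_contra hjW
        exact hj (hGv j k (Or.inl hjW))
      exact hWQ this
    rw [show ccfun q S (ccfun q S a b m) c (m+n)
        = ∑ᶠ k : ℤ, q ^ (k*(m+n)) • ⁅(S ^ k) (ccfun q S a b m), c⁆ from rfl,
      finsum_congr hinner]
    apply finsum_eq_finset_sum_of_support_subset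
    intro k hk
    rw [mem_support] at hk
    obtain ⟨j, _, hj⟩ := Finset.exists_ne_zero_of_sum_ne_zero hk
    have : k ∈ V := by
      by_contra hkV
      exact hj (hGv j k (Or.inr hkV))
    exact hVQ this
  -- assemble
  rw [hLHS1, hLHS2, hRHS, Finset.sum_comm (s := Q) (t := Q)
    (f := fun l k => q ^ (k*m + l*n) • ⁅(S ^ l) b, ⁅(S ^ k) a, c⁆⁆),
    ← Finset.sum_sub_distrib]
  rw [Finset.sum_comm (s := Q) (t := Q)
    (f := fun k j => q ^ (j*m + k*n) • ⁅⁅(S ^ j) a, (S ^ k) b⁆, c⁆)]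
  refine Finset.sum_congr rfl fun k _ => ?_
  rw [← Finset.sum_sub_distrib]
  refine Finset.sum_congr rfl fun l _ => ?_
  rw [← smul_sub, ← lie_lie]
lemma part4_single (hq : q ≠ 0) (hS : ∀ a b : g, S ⁅a, b⁆ = ⁅S a, S b⁆)
    (hloc : ∀ a b : g, {n : ℤ | ⁅(S ^ n) a, b⁆ ≠ 0}.Finite)
    (m n r : ℤ) (a b c : g) :
    betMap q S ⇑(Finsupp.single m a) (betMap q S ⇑(Finsupp.single n b) ⇑(Finsupp.single r c))
      - betMap q S ⇑(Finsupp.single n b) (betMap q S ⇑(Finsupp.single m a) ⇑(Finsupp.single r c))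
      = betMap q S (betMap q S ⇑(Finsupp.single m a) ⇑(Finsupp.single n b))
          ⇑(Finsupp.single r c) := by
  rw [bet_single, bet_single, bet_single, bet_single, bet_single, bet_single]
  rw [show n + (m+r) = m + (n+r) by ring, show (m+n) + r = m + (n+r) by ring,
    ← Finsupp.coe_sub]
  have hsub : (Finsupp.single (m+(n+r)) (ccfun q S a (ccfun q S b c n) m)
        - Finsupp.single (m+(n+r)) (ccfun q S b (ccfun q S a c m) n) : ℤ →₀ g)
      = Finsupp.single (m+(n+r))
          (ccfun q S a (ccfun q S b c n) m - ccfun q S b (ccfun q S a c m) n) := by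
    symm
    exact map_sub (Finsupp.singleAddHom (m+(n+r))) _ _
  rw [hsub, cc_jacobi q S hq hS hloc m n a b c]

lemma part4_ss (hq : q ≠ 0) (hS : ∀ a b : g, S ⁅a, b⁆ = ⁅S a, S b⁆)
    (hloc : ∀ a b : g, {n : ℤ | ⁅(S ^ n) a, b⁆ ≠ 0}.Finite)
    (m n : ℤ) (a b : g) (z : ℤ →₀ g) :
    betMap q S ⇑(Finsupp.single m a) (betMap q S ⇑(Finsupp.single n b) ⇑z)
      - betMap q S ⇑(Finsupp.single n b) (betMap q S ⇑(Finsupp.single m a) ⇑z)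
      = betMap q S (betMap q S ⇑(Finsupp.single m a) ⇑(Finsupp.single n b)) ⇑z := by
  induction z using Finsupp.induction with
  | zero =>
      rw [Finsupp.coe_zero, betR_zero, betR_zero, betR_zero, betR_zero]
      simp
  | single_add r c f hrf hc0 ih =>
      rw [Finsupp.coe_add,
        betR_add q S hloc _ _ _ (Finsupp.single n b).finite_support,
        betR_add q S hloc _ _ _ (Finsupp.single m a).finite_support,
        betR_add q S hloc _ _ _ (Finsupp.single m a).finite_support,
        betR_add q S hloc _ _ _ (Finsupp.single n b).finite_support,
        betR_add q S hloc _ _ _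
          (bet_support q S _ _ (Finsupp.single m a).finite_support
            (Finsupp.single n b).finite_support),
        add_sub_add_comm, ih, part4_single q S hq hS hloc m n r a b c]
lemma part4_s (hq : q ≠ 0) (hS : ∀ a b : g, S ⁅a, b⁆ = ⁅S a, S b⁆)
    (hloc : ∀ a b : g, {n : ℤ | ⁅(S ^ n) a, b⁆ ≠ 0}.Finite)
    (m : ℤ) (a : g) (y z : ℤ →₀ g) :
    betMap q S ⇑(Finsupp.single m a) (betMap q S ⇑y ⇑z)
      - betMap q S ⇑y (betMap q S ⇑(Finsupp.single m a) ⇑z)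
      = betMap q S (betMap q S ⇑(Finsupp.single m a) ⇑y) ⇑z := by
  induction y using Finsupp.induction with
  | zero => simp [Finsupp.coe_zero, betL_zero, betR_zero]
  | single_add n b f hnf hb0 ih =>
      rw [Finsupp.coe_add,
        betL_add q S hloc ⇑(Finsupp.single n b) ⇑f ⇑z
          (Finsupp.single n b).finite_support f.finite_support,
        betR_add q S hloc ⇑(Finsupp.single m a) (betMap q S ⇑(Finsupp.single n b) ⇑z)
          (betMap q S ⇑f ⇑z) (Finsupp.single m a).finite_support,
        betL_add q S hloc ⇑(Finsupp.single n b) ⇑f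
          (betMap q S ⇑(Finsupp.single m a) ⇑z)
          (Finsupp.single n b).finite_support f.finite_support,
        betR_add q S hloc ⇑(Finsupp.single m a) ⇑(Finsupp.single n b) ⇑f
          (Finsupp.single m a).finite_support,
        betL_add q S hloc (betMap q S ⇑(Finsupp.single m a) ⇑(Finsupp.single n b))
          (betMap q S ⇑(Finsupp.single m a) ⇑f) ⇑z
          (bet_support q S _ _ (Finsupp.single m a).finite_support
            (Finsupp.single n b).finite_support)
          (bet_support q S _ _ (Finsupp.single m a).finite_support f.finite_support),
        add_sub_add_comm, ih, part4_ss q S hq hS hloc m n a b z]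

lemma part4 (hq : q ≠ 0) (hS : ∀ a b : g, S ⁅a, b⁆ = ⁅S a, S b⁆)
    (hloc : ∀ a b : g, {n : ℤ | ⁅(S ^ n) a, b⁆ ≠ 0}.Finite)
    (x y z : ℤ →₀ g) :
    betMap q S ⇑x (betMap q S ⇑y ⇑z) - betMap q S ⇑y (betMap q S ⇑x ⇑z)
      = betMap q S (betMap q S ⇑x ⇑y) ⇑z := by
  induction x using Finsupp.induction with
  | zero => simp [Finsupp.coe_zero, betL_zero, betR_zero]
  | single_add m a f hmf ha0 ih =>
      rw [Finsupp.coe_add,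
        betL_add q S hloc ⇑(Finsupp.single m a) ⇑f (betMap q S ⇑y ⇑z)
          (Finsupp.single m a).finite_support f.finite_support,
        betL_add q S hloc ⇑(Finsupp.single m a) ⇑f ⇑z
          (Finsupp.single m a).finite_support f.finite_support,
        betR_add q S hloc ⇑y (betMap q S ⇑(Finsupp.single m a) ⇑z)
          (betMap q S ⇑f ⇑z) y.finite_support,
        betL_add q S hloc ⇑(Finsupp.single m a) ⇑f ⇑y
          (Finsupp.single m a).finite_support f.finite_support,
        betL_add q S hloc (betMap q S ⇑(Finsupp.single m a) ⇑y) (betMap q S ⇑f ⇑y) ⇑z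
          (bet_support q S _ _ (Finsupp.single m a).finite_support y.finite_support)
          (bet_support q S _ _ f.finite_support y.finite_support),
        add_sub_add_comm, ih, part4_s q S hq hS hloc m a y z]
end Stmt10Aux


/-- construction of the multiplicative formal distribution Lie algebra
`g_R = R[t,t⁻¹]/⟨μ_q S − 1⟩`.  With `L` the space of finitely supported families
(`ℤ →₀ g`), `Σ`, `β` as above, and `M = span_F {Σ(x) − x : x ∈ L}`:
(1) `β(Σ(x) − x, y) = 0`; (2) `β(x, Σ(y) − y) ∈ M`; (3) `β(x,y) + β(y,x) ∈ M`;
(4) `β(x, β(y,z)) − β(y, β(x,z)) = β(β(x,y), z)`.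
(Consequently `β` descends to a Lie bracket on `L/M`.) -/
theorem stmt_10 (F : Type*) [Field F] (q : F) (hq : q ≠ 0)
    (g : Type*) [LieRing g] [LieAlgebra F g]
    (S : g ≃ₗ[F] g) (hS : ∀ a b : g, S ⁅a, b⁆ = ⁅S a, S b⁆)
    (hloc : ∀ a b : g, {n : ℤ | ⁅(S ^ n) a, b⁆ ≠ 0}.Finite)
    (M : Submodule F (ℤ → g))
    (hM : M = Submodule.span F {h : ℤ → g | ∃ x : ℤ →₀ g, h = SigMap q S ⇑x - ⇑x}) :
    (∀ x y : ℤ →₀ g, betMap q S (SigMap q S ⇑x - ⇑x) ⇑y = 0)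
    ∧ (∀ x y : ℤ →₀ g, betMap q S ⇑x (SigMap q S ⇑y - ⇑y) ∈ M)
    ∧ (∀ x y : ℤ →₀ g, betMap q S ⇑x ⇑y + betMap q S ⇑y ⇑x ∈ M)
    ∧ (∀ x y z : ℤ →₀ g,
        betMap q S ⇑x (betMap q S ⇑y ⇑z) - betMap q S ⇑y (betMap q S ⇑x ⇑z)
          = betMap q S (betMap q S ⇑x ⇑y) ⇑z) := by
  refine ⟨?_, ?_, ?_, ?_⟩
  · intro x y
    exact Stmt10Aux.part1 q S hq hloc x ⇑y
  · intro x y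
    rw [Stmt10Aux.part2_eq q S hq hS hloc x ⇑y]
    have hw : (Function.support (betMap q S ⇑x ⇑y)).Finite :=
      Stmt10Aux.bet_support q S _ _ x.finite_support y.finite_support
    rw [hM]
    refine Submodule.subset_span ⟨Finsupp.ofSupportFinite _ hw, ?_⟩
    rw [Finsupp.ofSupportFinite_coe]
  · intro x y
    exact Stmt10Aux.part3 q S hq hS hloc M hM x y
  · intro x y z
    exact Stmt10Aux.part4 q S hq hS hloc x y z
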